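/- Let p be a prime, q := p if p is odd and q := 4 if p = 2, let n ≥ 0, and φ := φ(q·pⁿ). Let m be a positive multiple of q·pⁿ, let ℓ be a prime number not dividing m (so in particular ℓ ≠ p), and set f := ℓ·m. Then π_{f,m}(A_f) − (1 − ℓ^{φ−1}·[σ_ℓ])·A_m lies in the ℤ_p-submodule p^{n+1}·ℤ_p[(ℤ/mℤ)ˣ] + (1 − [σ_{−1}])·ℤ_p[(ℤ/mℤ)ˣ] of ℚ_p[(ℤ/mℤ)ˣ]. -/

import Mathlib

open scoped BigOperators

/-- `A_f := (−1/(f·φ))·Σ_{1≤a≤f, gcd(a,f)=1} a^φ·[ā] ∈ ℚ_p[(ℤ/fℤ)ˣ]`. -/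
noncomputable def aElt (p : ℕ) [Fact p.Prime] (φ f : ℕ) :
    MonoidAlgebra ℚ_[p] (ZMod f)ˣ :=
  (-(1 / ((f : ℚ_[p]) * (φ : ℚ_[p])))) •
    ∑ a ∈ Finset.Icc 1 f,
      if h : Nat.Coprime a f then
        ((a : ℚ_[p]) ^ φ) • MonoidAlgebra.single (ZMod.unitOfCoprime a h) (1 : ℚ_[p])
      else 0

/-- The map `π_{f,m} : ℚ_p[(ℤ/fℤ)ˣ] → ℚ_p[(ℤ/mℤ)ˣ]` induced by reduction mod `m`. -/
noncomputable def projMapP (p : ℕ) [Fact p.Prime] (f m : ℕ) (h : m ∣ f) :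
    MonoidAlgebra ℚ_[p] (ZMod f)ˣ →+* MonoidAlgebra ℚ_[p] (ZMod m)ˣ :=
  MonoidAlgebra.mapDomainRingHom ℚ_[p] (ZMod.unitsMap h)

lemma unit_coe_ne_zero {m : ℕ} (hm : 1 < m) (g : (ZMod m)ˣ) : (g : ZMod m) ≠ 0 := by
  haveI : NeZero m := ⟨by omega⟩
  intro h
  have hc := ZMod.val_coe_unit_coprime g
  rw [h, ZMod.val_zero] at hc
  exact absurd (Nat.coprime_zero_left m |>.mp hc) (by omega)

lemma val_unit_bounds {m : ℕ} (hm : 1 < m) (g : (ZMod m)ˣ) :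
    1 ≤ ((g : ZMod m)).val ∧ ((g : ZMod m)).val < m := by
  haveI : NeZero m := ⟨by omega⟩
  constructor
  · rcases Nat.eq_zero_or_pos ((g : ZMod m)).val with h | h
    · exact absurd ((ZMod.val_eq_zero _).mp h) (unit_coe_ne_zero hm g)
    · exact h
  · exact ZMod.val_lt _

lemma term_apply (p : ℕ) [Fact p.Prime] (φ f : ℕ) (a : ℕ) (g : (ZMod f)ˣ) :
    (if h : Nat.Coprime a f then
        ((a : ℚ_[p]) ^ φ) • MonoidAlgebra.single (ZMod.unitOfCoprime a h) (1 : ℚ_[p])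
      else 0).coeff g
      = if ((a : ZMod f) = (g : ZMod f) ∧ Nat.Coprime a f) then (a : ℚ_[p]) ^ φ else 0 := by
  by_cases hc : Nat.Coprime a f
  · rw [dif_pos hc, MonoidAlgebra.coeff_smul, Finsupp.smul_apply, MonoidAlgebra.coeff_single,
      Finsupp.single_apply]
    have hiff : (ZMod.unitOfCoprime a hc = g) ↔ ((a : ZMod f) = (g : ZMod f)) := by
      constructor
      · intro h; rw [← ZMod.coe_unitOfCoprime a hc, h]
      · intro h; exact Units.ext (by rw [ZMod.coe_unitOfCoprime]; exact h)
    by_cases he : (a : ZMod f) = (g : ZMod f)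
    · rw [if_pos (hiff.mpr he), if_pos (⟨he, hc⟩ : _ ∧ _), smul_eq_mul, mul_one]
    · rw [if_neg (fun h => he (hiff.mp h)), if_neg (fun h : _ ∧ _ => he h.1), smul_zero]
  · rw [dif_neg hc, if_neg (fun h : _ ∧ _ => hc h.2)]
    rfl

lemma aElt_apply (p : ℕ) [Fact p.Prime] (φ m : ℕ) (hm : 1 < m) (g : (ZMod m)ˣ) :
    (aElt p φ m).coeff g
      = -(1 / ((m : ℚ_[p]) * (φ : ℚ_[p]))) * ((((g : ZMod m)).val : ℚ_[p]) ^ φ) := by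
  haveI : NeZero m := ⟨by omega⟩
  rw [aElt, MonoidAlgebra.coeff_smul, Finsupp.smul_apply, MonoidAlgebra.coeff_sum,
    Finset.sum_apply', smul_eq_mul]
  congr 1
  simp_rw [term_apply]
  rw [Finset.sum_eq_single ((g : ZMod m)).val]
  · rw [if_pos ⟨ZMod.natCast_rightInverse _, ZMod.val_coe_unit_coprime g⟩]
  · intro b hb hne
    rw [if_neg]
    rintro ⟨h1, -⟩
    have hval := congrArg ZMod.val h1
    rw [ZMod.val_natCast] at hval
    rw [Finset.mem_Icc] at hb
    have hlt := (val_unit_bounds hm g)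
    rcases Nat.lt_or_ge b m with h | h
    · rw [Nat.mod_eq_of_lt h] at hval; exact hne hval
    · have : b = m := by omega
      rw [this, Nat.mod_self] at hval; omega
  · intro h
    exact absurd (Finset.mem_Icc.mpr ⟨(val_unit_bounds hm g).1,
      le_of_lt (val_unit_bounds hm g).2⟩) h

lemma term_apply_proj (p : ℕ) [Fact p.Prime] (φ m f : ℕ) (hdvd : m ∣ f) (a : ℕ)
    (g : (ZMod m)ˣ) :
    (Finsupp.mapDomain (ZMod.unitsMap hdvd)
      (if h : Nat.Coprime a f then
        ((a : ℚ_[p]) ^ φ) • MonoidAlgebra.single (ZMod.unitOfCoprime a h) (1 : ℚ_[p])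
      else 0).coeff) g
      = if ((a : ZMod m) = (g : ZMod m) ∧ Nat.Coprime a f) then (a : ℚ_[p]) ^ φ else 0 := by
  by_cases hc : Nat.Coprime a f
  · rw [dif_pos hc, MonoidAlgebra.coeff_smul, Finsupp.mapDomain_smul,
      MonoidAlgebra.coeff_single, Finsupp.mapDomain_single, Finsupp.smul_apply,
      Finsupp.single_apply]
    have hcoe : ((ZMod.unitsMap hdvd (ZMod.unitOfCoprime a hc)) : ZMod m) = (a : ZMod m) := by
      rw [ZMod.unitsMap_def, Units.coe_map]
      simp only [MonoidHom.coe_coe, ZMod.castHom_apply, ZMod.coe_unitOfCoprime]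
      exact ZMod.cast_natCast hdvd a
    have hiff : (ZMod.unitsMap hdvd (ZMod.unitOfCoprime a hc) = g)
        ↔ ((a : ZMod m) = (g : ZMod m)) := by
      constructor
      · intro h; rw [← hcoe, h]
      · intro h; exact Units.ext (by rw [hcoe]; exact h)
    by_cases he : (a : ZMod m) = (g : ZMod m)
    · rw [if_pos (hiff.mpr he), if_pos (⟨he, hc⟩ : _ ∧ _), smul_eq_mul, mul_one]
    · rw [if_neg (fun h => he (hiff.mp h)), if_neg (fun h : _ ∧ _ => he h.1), smul_zero]
  · rw [dif_neg hc, if_neg (fun h : _ ∧ _ => hc h.2)]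
    simp

lemma proj_aElt_apply (p : ℕ) [Fact p.Prime] (φ m ℓ : ℕ) (hm : 1 < m) (hℓ : ℓ.Prime)
    (hnd : ¬ ℓ ∣ m) (g : (ZMod m)ˣ) :
    (projMapP p (ℓ * m) m (dvd_mul_left m ℓ) (aElt p φ (ℓ * m))).coeff g
      = -(1 / (((ℓ * m : ℕ) : ℚ_[p]) * (φ : ℚ_[p]))) *
        ∑ j ∈ Finset.range ℓ,
          (if ℓ ∣ ((g : ZMod m).val + j * m) then 0
            else (((((g : ZMod m)).val + j * m : ℕ) : ℚ_[p]) ^ φ)) := by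
  haveI : NeZero m := ⟨by omega⟩
  set r := ((g : ZMod m)).val with hr
  have hr1 : 1 ≤ r := (val_unit_bounds hm g).1
  have hrm : r < m := (val_unit_bounds hm g).2
  show (MonoidAlgebra.mapDomain (ZMod.unitsMap (dvd_mul_left m ℓ)) (aElt p φ (ℓ * m))).coeff g = _
  rw [aElt, MonoidAlgebra.mapDomain_smul, MonoidAlgebra.coeff_smul, MonoidAlgebra.coeff_mapDomain,
    MonoidAlgebra.coeff_sum,
    Finsupp.mapDomain_finset_sum, Finsupp.smul_apply, Finset.sum_apply', smul_eq_mul]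
  congr 1
  trans (∑ a ∈ Finset.Icc 1 (ℓ*m),
      if ((a : ZMod m) = (g : ZMod m) ∧ Nat.Coprime a (ℓ*m)) then (a:ℚ_[p])^φ else 0)
  · exact Finset.sum_congr rfl fun a _ => term_apply_proj p φ m (ℓ*m) (dvd_mul_left m ℓ) a g
  -- reindex
  have hsub : (Finset.range ℓ).image (fun j => r + j * m) ⊆ Finset.Icc 1 (ℓ * m) := by
    intro a ha
    rw [Finset.mem_image] at ha
    obtain ⟨j, hj, rfl⟩ := ha
    rw [Finset.mem_range] at hj
    rw [Finset.mem_Icc]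
    constructor
    · omega
    · have : j * m ≤ (ℓ - 1) * m := Nat.mul_le_mul_right m (by omega)
      have h2 : (ℓ - 1) * m + m = ℓ * m := by
        have : ℓ - 1 + 1 = ℓ := by omega
        calc (ℓ - 1) * m + m = (ℓ - 1 + 1) * m := by ring
        _ = ℓ * m := by rw [this]
      omega
  rw [← Finset.sum_subset hsub, Finset.sum_image]
  · apply Finset.sum_congr rfl
    intro j hj
    have hcong : (((r + j * m : ℕ) : ZMod m)) = (g : ZMod m) := by
      push_cast
      rw [ZMod.natCast_self, mul_zero, add_zero, hr, ZMod.natCast_val, ZMod.cast_id]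
    have hcop : Nat.Coprime (r + j * m) (ℓ * m)
        ↔ ¬ ℓ ∣ (r + j * m) := by
      rw [Nat.coprime_mul_iff_right]
      constructor
      · intro ⟨h1, _⟩ hdvd
        exact (Nat.Prime.coprime_iff_not_dvd hℓ).mp h1.symm hdvd
      · intro h
        refine ⟨((Nat.Prime.coprime_iff_not_dvd hℓ).mpr h).symm, ?_⟩
        rw [Nat.coprime_add_mul_right_left]
        exact ZMod.val_coe_unit_coprime g
    by_cases hd : ℓ ∣ (r + j * m)
    · rw [if_pos hd, if_neg (fun h : _ ∧ _ => (hcop.mp h.2) hd)]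
    · rw [if_neg hd, if_pos ⟨hcong, hcop.mpr hd⟩]
  · intro j1 _ j2 _ he
    have : j1 * m = j2 * m := by simp only at he; omega
    exact Nat.eq_of_mul_eq_mul_right (by omega) this
  · intro a ha hnotim
    rw [if_neg]
    rintro ⟨h1, -⟩
    exfalso
    apply hnotim
    have hval := congrArg ZMod.val h1
    rw [ZMod.val_natCast] at hval
    rw [Finset.mem_Icc] at ha
    have hmod : a % m = r := hval
    have hdm : a / m * m + r = a := by rw [← hmod]; exact Nat.div_add_mod' a m
    rw [Finset.mem_image]
    refine ⟨a / m, ?_, by omega⟩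
    rw [Finset.mem_range]
    by_contra hge
    push_neg at hge
    have h1 : a / m * m ≥ ℓ * m := Nat.mul_le_mul_right m hge
    have h2 : a ≤ ℓ * m := ha.2
    omega

lemma exists_j0 (m ℓ : ℕ) (hm : 1 < m) (hℓ : ℓ.Prime) (hnd : ¬ ℓ ∣ m)
    (g u : (ZMod m)ˣ) (hu : ZMod.unitOfCoprime ℓ (hℓ.coprime_iff_not_dvd.mpr hnd) * u = g) :
    ∃ j₀ < ℓ, (g : ZMod m).val + j₀ * m = ℓ * ((u : ZMod m)).val := by
  haveI : NeZero m := ⟨by omega⟩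
  set r := ((g : ZMod m)).val with hr
  set c := ((u : ZMod m)).val with hc
  have hc1 : 1 ≤ c := (val_unit_bounds hm u).1
  have hcm : c < m := (val_unit_bounds hm u).2
  have hr1 : 1 ≤ r := (val_unit_bounds hm g).1
  have hrm : r < m := (val_unit_bounds hm g).2
  have hmod : (ℓ * c) % m = r := by
    have hcast : ((ℓ * c : ℕ) : ZMod m) = (g : ZMod m) := by
      push_cast
      rw [hc, ZMod.natCast_val, ZMod.cast_id, ← hu]
      rw [Units.val_mul, ZMod.coe_unitOfCoprime]
    have := congrArg ZMod.val hcast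
    rwa [ZMod.val_natCast] at this
  have hdm : (ℓ * c) / m * m + r = ℓ * c := by
    rw [← hmod]; exact Nat.div_add_mod' _ m
  refine ⟨(ℓ * c) / m, ?_, by omega⟩
  have h1 : (ℓ * c) / m * m < ℓ * m := by
    have : ℓ * c ≤ ℓ * (m - 1) := Nat.mul_le_mul_left ℓ (by omega)
    have h2 : ℓ * (m-1) + ℓ = ℓ * m := by
      have hm1 : m - 1 + 1 = m := by omega
      calc ℓ * (m-1) + ℓ = ℓ * ((m-1) + 1) := by ring
      _ = ℓ * m := by rw [hm1]
    have := hℓ.pos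
    omega
  exact Nat.lt_of_mul_lt_mul_right h1

lemma j0_unique (m ℓ r j j₀ : ℕ) (hℓ : ℓ.Prime) (hnd : ¬ ℓ ∣ m) (hj : j < ℓ) (hj₀ : j₀ < ℓ)
    (h1 : ℓ ∣ r + j * m) (h2 : ℓ ∣ r + j₀ * m) : j = j₀ := by
  have key : ∀ j1 j2 : ℕ, j1 ≤ j2 → j2 < ℓ → ℓ ∣ r + j1 * m → ℓ ∣ r + j2 * m → j1 = j2 := by
    intro j1 j2 hle hlt d1 d2
    have hd : ℓ ∣ (j2 - j1) * m := by
      have : (r + j2 * m) - (r + j1 * m) = (j2 - j1) * m := by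
        have : j1 * m ≤ j2 * m := Nat.mul_le_mul_right m hle
        rw [Nat.sub_mul]
        omega
      rw [← this]
      exact Nat.dvd_sub d2 d1
    have hd2 : ℓ ∣ j2 - j1 :=
      (Nat.Coprime.dvd_of_dvd_mul_right (hℓ.coprime_iff_not_dvd.mpr hnd) hd)
    rcases Nat.eq_zero_or_pos (j2 - j1) with h0 | h0
    · omega
    · have := Nat.le_of_dvd h0 hd2
      omega
  rcases le_total j j₀ with h | h
  · exact key j j₀ h hj₀ h1 h2
  · exact (key j₀ j h hj h2 h1).symm

lemma sum_ite_split (p : ℕ) [Fact p.Prime] (φ r m ℓ c j₀ : ℕ) (hj₀ : j₀ < ℓ)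
    (heq : r + j₀ * m = ℓ * c)
    (huniq : ∀ j, j < ℓ → ℓ ∣ r + j * m → j = j₀) :
    ∑ j ∈ Finset.range ℓ, (if ℓ ∣ (r + j * m) then 0 else (((r + j * m : ℕ) : ℚ_[p]) ^ φ))
      = (∑ j ∈ Finset.range ℓ, (((r + j * m : ℕ) : ℚ_[p]) ^ φ))
        - ((ℓ * c : ℕ) : ℚ_[p]) ^ φ := by
  have key : ∑ j ∈ Finset.range ℓ,
      (if ℓ ∣ (r + j * m) then (((r + j * m : ℕ) : ℚ_[p]) ^ φ) else 0)
      = ((ℓ * c : ℕ) : ℚ_[p]) ^ φ := by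
    rw [Finset.sum_eq_single j₀]
    · rw [if_pos ⟨c, heq⟩, heq]
    · intro b hb hne
      rw [if_neg (fun hd => hne (huniq b (Finset.mem_range.mp hb) hd))]
    · intro h
      exact absurd (Finset.mem_range.mpr hj₀) h
  rw [← key, ← Finset.sum_sub_distrib]
  apply Finset.sum_congr rfl
  intro j _
  by_cases hd : ℓ ∣ r + j * m
  · simp [hd]
  · simp [hd]

lemma lhs_apply (p : ℕ) [Fact p.Prime] (φ m ℓ : ℕ) (hφ : 0 < φ) (hm : 1 < m)
    (hℓ : ℓ.Prime) (hnd : ¬ ℓ ∣ m) (g : (ZMod m)ˣ) :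
    (projMapP p (ℓ * m) m (dvd_mul_left m ℓ) (aElt p φ (ℓ * m))
        - (1 - ((ℓ : ℚ_[p]) ^ (φ - 1)) •
              MonoidAlgebra.single
                (ZMod.unitOfCoprime ℓ (hℓ.coprime_iff_not_dvd.mpr hnd)) (1 : ℚ_[p]))
          * aElt p φ m).coeff g
      = -(1 / ((ℓ : ℚ_[p]) * (m : ℚ_[p]) * (φ : ℚ_[p]))) *
          ((∑ j ∈ Finset.range ℓ, ((((g : ZMod m)).val + j * m : ℕ) : ℚ_[p]) ^ φ)
            - (ℓ : ℚ_[p]) * ((((g : ZMod m)).val : ℚ_[p]) ^ φ)) := by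
  haveI : NeZero m := ⟨by omega⟩
  set σ := ZMod.unitOfCoprime ℓ (hℓ.coprime_iff_not_dvd.mpr hnd) with hσ
  set u := σ⁻¹ * g with hu
  have hug : σ * u = g := by rw [hu]; group
  obtain ⟨j₀, hj₀, heq⟩ := exists_j0 m ℓ hm hℓ hnd g u hug
  have huniq : ∀ j, j < ℓ → ℓ ∣ (g : ZMod m).val + j * m → j = j₀ := by
    intro j hj hd
    exact j0_unique m ℓ _ j j₀ hℓ hnd hj hj₀ hd ⟨_, heq⟩
  rw [MonoidAlgebra.coeff_sub, Finsupp.sub_apply, proj_aElt_apply p φ m ℓ hm hℓ hnd g,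
    sum_ite_split p φ _ m ℓ _ j₀ hj₀ heq huniq,
    sub_mul, one_mul, MonoidAlgebra.coeff_sub, Finsupp.sub_apply, smul_mul_assoc,
    MonoidAlgebra.coeff_smul, Finsupp.smul_apply,
    MonoidAlgebra.coeff_single_mul_apply, smul_eq_mul,
    aElt_apply p φ m hm g, aElt_apply p φ m hm (σ⁻¹ * g)]
  have hℓ0 : (ℓ : ℚ_[p]) ≠ 0 := Nat.cast_ne_zero.mpr hℓ.ne_zero
  have hm0 : (m : ℚ_[p]) ≠ 0 := Nat.cast_ne_zero.mpr (by omega)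
  have hφ0 : (φ : ℚ_[p]) ≠ 0 := Nat.cast_ne_zero.mpr (by omega)
  have hpow : (ℓ : ℚ_[p]) ^ φ = (ℓ : ℚ_[p]) ^ (φ - 1) * (ℓ : ℚ_[p]) := by
    conv_lhs => rw [show φ = (φ - 1) + 1 by omega]
    rw [pow_succ]
  push_cast [mul_pow]
  rw [← Units.val_mul, ← hu, hpow]
  field_simp
  ring

lemma expand_sum (p : ℕ) [Fact p.Prime] (φ ℓ m r : ℕ) :
    (∑ j ∈ Finset.range ℓ, ((r + j * m : ℕ) : ℚ_[p]) ^ φ)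
        - (ℓ : ℚ_[p]) * ((r : ℚ_[p]) ^ φ)
      = ∑ i ∈ Finset.range φ,
          ((φ.choose (i+1) : ℚ_[p]) * (m : ℚ_[p]) ^ (i+1) *
            (∑ j ∈ Finset.range ℓ, (j : ℚ_[p]) ^ (i+1)) * (r : ℚ_[p]) ^ (φ - (i+1))) := by
  have h1 : ∀ j : ℕ, ((r + j * m : ℕ) : ℚ_[p]) ^ φ
      = ∑ k ∈ Finset.range (φ + 1),
          (j : ℚ_[p]) ^ k * ((m : ℚ_[p]) ^ k * ((r : ℚ_[p]) ^ (φ - k) * (φ.choose k : ℚ_[p]))) := by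
    intro j
    push_cast
    rw [add_comm ((r : ℚ_[p])) _, add_pow]
    apply Finset.sum_congr rfl
    intro k _
    rw [mul_pow]
    ring
  simp_rw [h1]
  rw [Finset.sum_comm]
  have h2 : ∀ k, ∑ j ∈ Finset.range ℓ,
      (j : ℚ_[p]) ^ k * ((m : ℚ_[p]) ^ k * ((r : ℚ_[p]) ^ (φ - k) * (φ.choose k : ℚ_[p])))
      = (∑ j ∈ Finset.range ℓ, (j : ℚ_[p]) ^ k) *
          ((m : ℚ_[p]) ^ k * ((r : ℚ_[p]) ^ (φ - k) * (φ.choose k : ℚ_[p]))) := by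
    intro k
    rw [Finset.sum_mul]
  simp_rw [h2]
  rw [Finset.sum_range_succ']
  have h3 : (∑ j ∈ Finset.range ℓ, (j : ℚ_[p]) ^ 0) *
      ((m : ℚ_[p]) ^ 0 * ((r : ℚ_[p]) ^ (φ - 0) * (φ.choose 0 : ℚ_[p])))
      = (ℓ : ℚ_[p]) * (r : ℚ_[p]) ^ φ := by
    simp
  rw [h3, add_sub_cancel_right]
  apply Finset.sum_congr rfl
  intro i _
  ring

section norms
variable (p : ℕ) [Fact p.Prime]

lemma norm_nat_le_one (a : ℕ) : ‖(a : ℚ_[p])‖ ≤ 1 := by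
  have := Padic.norm_int_le_one (p := p) (a : ℤ)
  push_cast at this
  exact this

lemma norm_nat_eq_one_of_not_dvd (a : ℕ) (h : ¬ p ∣ a) : ‖(a : ℚ_[p])‖ = 1 := by
  rcases lt_or_eq_of_le (norm_nat_le_one p a) with hlt | he
  · exfalso
    have : ((p : ℤ)) ∣ (a : ℤ) := by
      rw [← Padic.norm_intCast_lt_one_iff]
      push_cast
      exact hlt
    exact h (by exact_mod_cast this)
  · exact he

lemma norm_nat_le_pow_of_dvd (e m : ℕ) (h : p ^ e ∣ m) :
    ‖(m : ℚ_[p])‖ ≤ ‖(p : ℚ_[p])‖ ^ e := by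
  obtain ⟨m', rfl⟩ := h
  push_cast
  rw [norm_mul, norm_pow]
  exact mul_le_of_le_one_right (by positivity) (norm_nat_le_one p m')

lemma norm_nat_eq_padic (k : ℕ) (hk : k ≠ 0) :
    ‖(k : ℚ_[p])‖ = ‖(p : ℚ_[p])‖ ^ (k.factorization p) := by
  conv_lhs => rw [← Nat.ordProj_mul_ordCompl_eq_self k p]
  push_cast
  rw [norm_mul, norm_pow,
    norm_nat_eq_one_of_not_dvd p _ (Nat.not_dvd_ordCompl Fact.out hk), mul_one]

lemma factorization_le_sub_one (k : ℕ) (hk : 1 ≤ k) : k.factorization p ≤ k - 1 := by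
  set v := k.factorization p with hv
  have h1 : p ^ v ∣ k := Nat.ordProj_dvd k p
  have h2 : p ^ v ≤ k := Nat.le_of_dvd (by omega) h1
  have h3 : 2 ^ v ≤ p ^ v := Nat.pow_le_pow_left (Fact.out : p.Prime).two_le v
  have h4 : v < 2 ^ v := Nat.lt_two_pow_self
  omega

lemma three_pow_ge (v : ℕ) (hv : 1 ≤ v) : v + 2 ≤ 3 ^ v := by
  induction v with
  | zero => omega
  | succ w ih =>
    rcases Nat.eq_zero_or_pos w with h | h
    · subst h; norm_num
    · have := ih h
      have h3 : 3 ^ (w + 1) = 3 * 3 ^ w := by ring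
      omega

lemma factorization_le_sub_two (k : ℕ) (hp : p ≠ 2) (hk : 2 ≤ k) :
    k.factorization p ≤ k - 2 := by
  set v := k.factorization p with hv
  rcases Nat.eq_zero_or_pos v with h0 | h0
  · omega
  · have h1 : p ^ v ∣ k := Nat.ordProj_dvd k p
    have h2 : p ^ v ≤ k := Nat.le_of_dvd (by omega) h1
    have hp3 : 3 ≤ p := by
      have := (Fact.out : p.Prime).two_le
      rcases Nat.lt_or_ge p 3 with h | h
      · interval_cases p <;> simp_all
      · exact h
    have h3 : 3 ^ v ≤ p ^ v := Nat.pow_le_pow_left hp3 v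
    have h4 := three_pow_ge v h0
    omega

lemma norm_m_pow_le_A (m k : ℕ) (hk : 1 ≤ k) (hpm : p ∣ m) :
    ‖(m : ℚ_[p])‖ ^ (k - 1) ≤ ‖(k : ℚ_[p])‖ := by
  have hp1 : ‖(p : ℚ_[p])‖ ≤ 1 := norm_nat_le_one p p
  have hp0 : (0:ℝ) ≤ ‖(p : ℚ_[p])‖ := norm_nonneg _
  rw [norm_nat_eq_padic p k (by omega)]
  calc ‖(m : ℚ_[p])‖ ^ (k - 1) ≤ (‖(p : ℚ_[p])‖ ^ 1) ^ (k - 1) := by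
        apply pow_le_pow_left₀ (norm_nonneg _)
        exact norm_nat_le_pow_of_dvd p 1 m (by simpa using hpm)
  _ = ‖(p : ℚ_[p])‖ ^ (k - 1) := by rw [pow_one]
  _ ≤ ‖(p : ℚ_[p])‖ ^ (k.factorization p) := by
        apply pow_le_pow_of_le_one hp0 hp1
        exact factorization_le_sub_one p k hk

lemma norm_m_pow_le_B (n m k : ℕ) (hk : 2 ≤ k)
    (hm : p ^ (if p = 2 then n + 2 else n + 1) ∣ m) :
    ‖(m : ℚ_[p])‖ ^ (k - 1) ≤ ‖(k : ℚ_[p])‖ * ‖(p : ℚ_[p])‖ ^ (n + 1) := by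
  have hp1 : ‖(p : ℚ_[p])‖ ≤ 1 := norm_nat_le_one p p
  have hp0 : (0:ℝ) ≤ ‖(p : ℚ_[p])‖ := norm_nonneg _
  set e := if p = 2 then n + 2 else n + 1 with he
  have harith : k.factorization p + (n + 1) ≤ e * (k - 1) := by
    obtain ⟨d, rfl⟩ : ∃ d, k = d + 2 := ⟨k - 2, by omega⟩
    have hsub : d + 2 - 1 = d + 1 := by omega
    by_cases hp2 : p = 2
    · have hvk : (d + 2).factorization p ≤ d + 1 := by
        have := factorization_le_sub_one p (d + 2) (by omega)
        omega
      rw [he, if_pos hp2, hsub]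
      nlinarith
    · have hvk : (d + 2).factorization p ≤ d := by
        have := factorization_le_sub_two p (d + 2) hp2 (by omega)
        omega
      rw [he, if_neg hp2, hsub]
      nlinarith
  rw [norm_nat_eq_padic p k (by omega), ← pow_add]
  calc ‖(m : ℚ_[p])‖ ^ (k - 1) ≤ (‖(p : ℚ_[p])‖ ^ e) ^ (k - 1) := by
        apply pow_le_pow_left₀ (norm_nonneg _)
        exact norm_nat_le_pow_of_dvd p e m hm
  _ = ‖(p : ℚ_[p])‖ ^ (e * (k - 1)) := by rw [← pow_mul]
  _ ≤ ‖(p : ℚ_[p])‖ ^ (k.factorization p + (n + 1)) := pow_le_pow_of_le_one hp0 hp1 harith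

lemma norm_choose_mul (φ k : ℕ) (hφ : 1 ≤ φ) (hk : 1 ≤ k) :
    ‖(φ.choose k : ℚ_[p])‖ * ‖(k : ℚ_[p])‖ ≤ ‖(φ : ℚ_[p])‖ := by
  have hid : φ * (φ - 1).choose (k - 1) = φ.choose k * k := by
    have h := Nat.add_one_mul_choose_eq (φ - 1) (k - 1)
    simp only [Nat.succ_eq_add_one, Nat.sub_add_cancel hφ, Nat.sub_add_cancel hk] at h
    exact h
  have hc := congrArg (fun t : ℕ => ‖(t : ℚ_[p])‖) hid
  simp only [Nat.cast_mul, norm_mul] at hc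
  rw [← hc]
  exact mul_le_of_le_one_right (norm_nonneg _) (norm_nat_le_one p _)

lemma norm_S_le_one (ℓ k : ℕ) : ‖∑ j ∈ Finset.range ℓ, (j : ℚ_[p]) ^ k‖ ≤ 1 := by
  have h : (∑ j ∈ Finset.range ℓ, (j : ℚ_[p]) ^ k)
      = ((∑ j ∈ Finset.range ℓ, j ^ k : ℕ) : ℚ_[p]) := by push_cast; rfl
  rw [h]
  exact norm_nat_le_one p _

lemma norm_rpow_le_one (r k : ℕ) : ‖(r : ℚ_[p]) ^ k‖ ≤ 1 := by
  rw [norm_pow]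
  exact pow_le_one₀ (norm_nonneg _) (norm_nat_le_one p r)

lemma bound_A (φ ℓ m r : ℕ) (hφ : 1 ≤ φ) (hpm : p ∣ m) :
    ‖(∑ j ∈ Finset.range ℓ, ((r + j * m : ℕ) : ℚ_[p]) ^ φ)
        - (ℓ : ℚ_[p]) * ((r : ℚ_[p]) ^ φ)‖
      ≤ ‖(m : ℚ_[p])‖ * ‖(φ : ℚ_[p])‖ := by
  rw [expand_sum]
  apply IsUltrametricDist.norm_sum_le_of_forall_le_of_nonneg (by positivity)
  intro i _
  set k := i + 1 with hk
  rw [norm_mul, norm_mul, norm_mul, norm_pow, norm_pow]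
  have hmk : ‖(m : ℚ_[p])‖ ^ k = ‖(m : ℚ_[p])‖ ^ (k - 1) * ‖(m : ℚ_[p])‖ := by
    conv_lhs => rw [show k = (k - 1) + 1 by omega, pow_succ]
  calc ‖(φ.choose k : ℚ_[p])‖ * ‖(m : ℚ_[p])‖ ^ k *
        ‖∑ j ∈ Finset.range ℓ, (j : ℚ_[p]) ^ k‖ * ‖(r : ℚ_[p])‖ ^ (φ - k)
      ≤ ‖(φ.choose k : ℚ_[p])‖ * ‖(m : ℚ_[p])‖ ^ k * 1 * 1 := by
        gcongr
        · exact norm_S_le_one p ℓ k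
        · exact pow_le_one₀ (norm_nonneg _) (norm_nat_le_one p r)
  _ = ‖(φ.choose k : ℚ_[p])‖ * ‖(m : ℚ_[p])‖ ^ (k - 1) * ‖(m : ℚ_[p])‖ := by
        rw [hmk]; ring
  _ ≤ ‖(φ.choose k : ℚ_[p])‖ * ‖(k : ℚ_[p])‖ * ‖(m : ℚ_[p])‖ := by
        gcongr
        exact norm_m_pow_le_A p m k (by omega) hpm
  _ ≤ ‖(φ : ℚ_[p])‖ * ‖(m : ℚ_[p])‖ := by
        gcongr
        exact norm_choose_mul p φ k hφ (by omega)
  _ = ‖(m : ℚ_[p])‖ * ‖(φ : ℚ_[p])‖ := mul_comm _ _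

lemma bound_B (n φ ℓ m r s : ℕ) (hφ : 1 ≤ φ) (hodd : Odd (φ - 1)) (hrs : r + s = m)
    (hm : p ^ (if p = 2 then n + 2 else n + 1) ∣ m) :
    ‖((∑ j ∈ Finset.range ℓ, ((r + j * m : ℕ) : ℚ_[p]) ^ φ)
        - (ℓ : ℚ_[p]) * ((r : ℚ_[p]) ^ φ))
      + ((∑ j ∈ Finset.range ℓ, ((s + j * m : ℕ) : ℚ_[p]) ^ φ)
        - (ℓ : ℚ_[p]) * ((s : ℚ_[p]) ^ φ))‖
      ≤ ‖(m : ℚ_[p])‖ * ‖(φ : ℚ_[p])‖ * ‖(p : ℚ_[p])‖ ^ (n + 1) := by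
  have hmp : ‖(m : ℚ_[p])‖ ≤ ‖(p : ℚ_[p])‖ ^ (n + 1) := by
    apply norm_nat_le_pow_of_dvd
    exact dvd_trans (pow_dvd_pow p (by split <;> omega)) hm
  rw [expand_sum, expand_sum, ← Finset.sum_add_distrib]
  apply IsUltrametricDist.norm_sum_le_of_forall_le_of_nonneg (by positivity)
  intro i _
  rcases Nat.eq_zero_or_pos i with hi | hi
  · -- k = 1 : use odd-power pairing
    subst hi
    obtain ⟨w, hw⟩ : m ∣ r ^ (φ - 1) + s ^ (φ - 1) := by
      rw [← hrs]
      exact Odd.nat_add_dvd_pow_add_pow r s hodd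
    have hfactor : (φ.choose (0+1) : ℚ_[p]) * (m : ℚ_[p]) ^ (0+1) *
          (∑ j ∈ Finset.range ℓ, (j : ℚ_[p]) ^ (0+1)) * (r : ℚ_[p]) ^ (φ - (0+1))
        + (φ.choose (0+1) : ℚ_[p]) * (m : ℚ_[p]) ^ (0+1) *
          (∑ j ∈ Finset.range ℓ, (j : ℚ_[p]) ^ (0+1)) * (s : ℚ_[p]) ^ (φ - (0+1))
        = (φ.choose 1 : ℚ_[p]) * (m : ℚ_[p]) *
          (∑ j ∈ Finset.range ℓ, (j : ℚ_[p]) ^ 1) * ((m * w : ℕ) : ℚ_[p]) := by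
      have : ((r : ℚ_[p]) ^ (φ - 1) + (s : ℚ_[p]) ^ (φ - 1)) = ((m * w : ℕ) : ℚ_[p]) := by
        rw [← hw]; push_cast; ring
      rw [← this]
      ring
    rw [hfactor, norm_mul, norm_mul, norm_mul]
    have hw2 : ‖((m * w : ℕ) : ℚ_[p])‖ ≤ ‖(p : ℚ_[p])‖ ^ (n + 1) := by
      push_cast
      rw [norm_mul]
      exact le_trans (mul_le_of_le_one_right (norm_nonneg _) (norm_nat_le_one p w)) hmp
    calc ‖(φ.choose 1 : ℚ_[p])‖ * ‖(m : ℚ_[p])‖ *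
          ‖∑ j ∈ Finset.range ℓ, (j : ℚ_[p]) ^ 1‖ * ‖((m * w : ℕ) : ℚ_[p])‖
        ≤ ‖(φ : ℚ_[p])‖ * ‖(m : ℚ_[p])‖ * 1 * ‖(p : ℚ_[p])‖ ^ (n + 1) := by
          gcongr
          · simp [Nat.choose_one_right]
          · exact norm_S_le_one p ℓ 1
    _ = ‖(m : ℚ_[p])‖ * ‖(φ : ℚ_[p])‖ * ‖(p : ℚ_[p])‖ ^ (n + 1) := by ring
  · -- k ≥ 2
    set k := i + 1 with hk
    have hterm : ∀ t : ℕ,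
        ‖(φ.choose k : ℚ_[p])‖ * ‖(m : ℚ_[p])‖ ^ k *
          ‖∑ j ∈ Finset.range ℓ, (j : ℚ_[p]) ^ k‖ * ‖(t : ℚ_[p])‖ ^ (φ - k)
        ≤ ‖(m : ℚ_[p])‖ * ‖(φ : ℚ_[p])‖ * ‖(p : ℚ_[p])‖ ^ (n + 1) := by
      intro t
      have hmk : ‖(m : ℚ_[p])‖ ^ k = ‖(m : ℚ_[p])‖ ^ (k - 1) * ‖(m : ℚ_[p])‖ := by
        conv_lhs => rw [show k = (k - 1) + 1 by omega, pow_succ]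
      calc ‖(φ.choose k : ℚ_[p])‖ * ‖(m : ℚ_[p])‖ ^ k *
            ‖∑ j ∈ Finset.range ℓ, (j : ℚ_[p]) ^ k‖ * ‖(t : ℚ_[p])‖ ^ (φ - k)
          ≤ ‖(φ.choose k : ℚ_[p])‖ * ‖(m : ℚ_[p])‖ ^ k * 1 * 1 := by
            gcongr
            · exact norm_S_le_one p ℓ k
            · exact pow_le_one₀ (norm_nonneg _) (norm_nat_le_one p t)
      _ = ‖(φ.choose k : ℚ_[p])‖ * ‖(m : ℚ_[p])‖ ^ (k - 1) * ‖(m : ℚ_[p])‖ := by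
            rw [hmk]; ring
      _ ≤ ‖(φ.choose k : ℚ_[p])‖ * (‖(k : ℚ_[p])‖ * ‖(p : ℚ_[p])‖ ^ (n + 1)) *
            ‖(m : ℚ_[p])‖ := by
            gcongr
            exact norm_m_pow_le_B p n m k (by omega) hm
      _ = (‖(φ.choose k : ℚ_[p])‖ * ‖(k : ℚ_[p])‖) * ‖(m : ℚ_[p])‖ *
            ‖(p : ℚ_[p])‖ ^ (n + 1) := by ring
      _ ≤ ‖(φ : ℚ_[p])‖ * ‖(m : ℚ_[p])‖ * ‖(p : ℚ_[p])‖ ^ (n + 1) := by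
            gcongr
            exact norm_choose_mul p φ k hφ (by omega)
      _ = ‖(m : ℚ_[p])‖ * ‖(φ : ℚ_[p])‖ * ‖(p : ℚ_[p])‖ ^ (n + 1) := by ring
    apply le_trans (Padic.nonarchimedean _ _)
    apply max_le
    · calc ‖(φ.choose k : ℚ_[p]) * (m : ℚ_[p]) ^ k *
            (∑ j ∈ Finset.range ℓ, (j : ℚ_[p]) ^ k) * (r : ℚ_[p]) ^ (φ - k)‖
          = ‖(φ.choose k : ℚ_[p])‖ * ‖(m : ℚ_[p])‖ ^ k *
            ‖∑ j ∈ Finset.range ℓ, (j : ℚ_[p]) ^ k‖ * ‖(r : ℚ_[p])‖ ^ (φ - k) := by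
            rw [norm_mul, norm_mul, norm_mul, norm_pow, norm_pow]
      _ ≤ _ := hterm r
    · calc ‖(φ.choose k : ℚ_[p]) * (m : ℚ_[p]) ^ k *
            (∑ j ∈ Finset.range ℓ, (j : ℚ_[p]) ^ k) * (s : ℚ_[p]) ^ (φ - k)‖
          = ‖(φ.choose k : ℚ_[p])‖ * ‖(m : ℚ_[p])‖ ^ k *
            ‖∑ j ∈ Finset.range ℓ, (j : ℚ_[p]) ^ k‖ * ‖(s : ℚ_[p])‖ ^ (φ - k) := by
            rw [norm_mul, norm_mul, norm_mul, norm_pow, norm_pow]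
      _ ≤ _ := hterm s

end norms

lemma split_lemma (p : ℕ) [Fact p.Prime] (m : ℕ) (hm : 2 < m) (n : ℕ)
    (x : MonoidAlgebra ℚ_[p] (ZMod m)ˣ)
    (h1 : ∀ g : (ZMod m)ˣ, ‖x.coeff g‖ ≤ 1)
    (h2 : ∀ g : (ZMod m)ˣ, ‖x.coeff g + x.coeff (-g)‖ ≤ ‖(p:ℚ_[p])‖^(n+1)) :
    ∃ y z : MonoidAlgebra ℚ_[p] (ZMod m)ˣ,
      (∀ g : (ZMod m)ˣ, ∃ t : ℤ_[p], y.coeff g = (t : ℚ_[p])) ∧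
      (∀ g : (ZMod m)ˣ, ∃ t : ℤ_[p], z.coeff g = (t : ℚ_[p])) ∧
      x = ((p : ℚ_[p]) ^ (n + 1)) • y
        + (1 - MonoidAlgebra.single (-1 : (ZMod m)ˣ) (1 : ℚ_[p])) * z := by
  haveI : NeZero m := ⟨by omega⟩
  have hppos : (0:ℝ) < ‖(p : ℚ_[p])‖ := by
    rw [norm_pos_iff]
    exact_mod_cast (Fact.out : p.Prime).ne_zero
  have hp0 : ((p : ℚ_[p]) ^ (n+1)) ≠ 0 :=
    pow_ne_zero _ (by exact_mod_cast (Fact.out : p.Prime).ne_zero)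
  have hne : ∀ h : (ZMod m)ˣ, h ≠ -h := by
    intro h hh
    have h1' : (h : ZMod m) = -(h : ZMod m) := by
      conv_lhs => rw [hh]
      exact Units.val_neg h
    have h2' : (2 : ZMod m) * (h : ZMod m) = 0 := by
      rw [two_mul]; rw [eq_neg_iff_add_eq_zero] at h1'; exact h1'
    have h3' : (2 : ZMod m) = 0 := by
      have := congrArg (· * ((h⁻¹ : (ZMod m)ˣ) : ZMod m)) h2'
      simpa [mul_assoc] using this
    have h4' : m ∣ 2 := (ZMod.natCast_eq_zero_iff 2 m).mp (by exact_mod_cast h3')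
    exact absurd (Nat.le_of_dvd (by norm_num) h4') (by omega)
  set S : Finset (ZMod m)ˣ := Finset.univ.filter
      (fun g : (ZMod m)ˣ => ((g : ZMod m)).val < (((-g : (ZMod m)ˣ) : ZMod m)).val) with hS
  have hmem : ∀ h : (ZMod m)ˣ, h ∉ S → -h ∈ S := by
    intro h hh
    simp only [hS, Finset.mem_filter, Finset.mem_univ, true_and, not_lt] at hh ⊢
    rw [neg_neg]
    rcases lt_or_eq_of_le hh with h' | h'
    · exact h'
    · exact absurd (Units.ext (ZMod.val_injective m h')) (fun e => hne h e.symm)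
  have hnotboth : ∀ h : (ZMod m)ˣ, h ∈ S → -h ∉ S := by
    intro h hh hc
    simp only [hS, Finset.mem_filter, Finset.mem_univ, true_and, neg_neg] at hh hc
    exact absurd hc (not_lt.mpr hh.le)
  set z : MonoidAlgebra ℚ_[p] (ZMod m)ˣ := ∑ g ∈ S, MonoidAlgebra.single g (x.coeff g) with hz
  have hzapp : ∀ h : (ZMod m)ˣ, z.coeff h = if h ∈ S then x.coeff h else 0 := by
    intro h
    rw [hz, MonoidAlgebra.coeff_sum, Finset.sum_apply']
    simp_rw [MonoidAlgebra.coeff_single, Finsupp.single_apply]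
    exact Finset.sum_ite_eq' S h (fun g => x.coeff g)
  have hmul : ∀ h : (ZMod m)ˣ,
      ((1 - MonoidAlgebra.single (-1 : (ZMod m)ˣ) (1 : ℚ_[p])) * z).coeff h
      = z.coeff h - z.coeff (-h) := by
    intro h
    rw [sub_mul, one_mul, MonoidAlgebra.coeff_sub, Finsupp.sub_apply,
      MonoidAlgebra.coeff_single_mul_apply]
    simp
  set w : MonoidAlgebra ℚ_[p] (ZMod m)ˣ :=
    x - (1 - MonoidAlgebra.single (-1 : (ZMod m)ˣ) (1 : ℚ_[p])) * z with hw
  have hwg : ∀ g : (ZMod m)ˣ, w.coeff g = if g ∈ S then 0 else x.coeff g + x.coeff (-g) := by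
    intro g
    rw [hw, MonoidAlgebra.coeff_sub, Finsupp.sub_apply, hmul, hzapp, hzapp]
    by_cases hg : g ∈ S
    · have := hnotboth g hg
      simp [hg, this]
    · have := hmem g hg
      simp [hg, this]
  refine ⟨(((p : ℚ_[p]) ^ (n+1))⁻¹) • w, z, ?_, ?_, ?_⟩
  · intro g
    have : ‖((((p : ℚ_[p]) ^ (n+1))⁻¹ • w).coeff g)‖ ≤ 1 := by
      rw [MonoidAlgebra.coeff_smul, Finsupp.smul_apply, smul_eq_mul, norm_mul, norm_inv, norm_pow, hwg]
      by_cases hg : g ∈ S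
      · simp [hg]
      · rw [if_neg hg, inv_mul_le_iff₀ (by positivity), mul_one]
        exact h2 g
    exact ⟨⟨_, this⟩, rfl⟩
  · intro g
    refine ⟨⟨z.coeff g, ?_⟩, rfl⟩
    rw [hzapp]
    by_cases hg : g ∈ S <;> simp [hg, h1 g]
  · rw [smul_inv_smul₀ hp0, hw]
    ring

theorem statement11 (p : ℕ) [Fact p.Prime] (n : ℕ)
    (q : ℕ) (hq : q = if p = 2 then 4 else p)
    (φ : ℕ) (hφ : φ = (q * p ^ n).totient)
    (m : ℕ) (hm : 0 < m) (hmul : q * p ^ n ∣ m)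
    (ℓ : ℕ) (hℓ : ℓ.Prime) (hnd : ¬ ℓ ∣ m) :
    -- `π_{f,m}(A_f) − (1 − ℓ^{φ−1}·[σ_ℓ])·A_m ∈ p^{n+1}·ℤ_p[(ℤ/mℤ)ˣ] + (1 − [σ_{−1}])·ℤ_p[(ℤ/mℤ)ˣ]`
    ∃ y z : MonoidAlgebra ℚ_[p] (ZMod m)ˣ,
      (∀ g : (ZMod m)ˣ, ∃ t : ℤ_[p], y.coeff g = (t : ℚ_[p])) ∧
      (∀ g : (ZMod m)ˣ, ∃ t : ℤ_[p], z.coeff g = (t : ℚ_[p])) ∧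
      projMapP p (ℓ * m) m (dvd_mul_left m ℓ) (aElt p φ (ℓ * m))
        - (1 - ((ℓ : ℚ_[p]) ^ (φ - 1)) •
              MonoidAlgebra.single
                (ZMod.unitOfCoprime ℓ (hℓ.coprime_iff_not_dvd.mpr hnd)) (1 : ℚ_[p]))
          * aElt p φ m
      = ((p : ℚ_[p]) ^ (n + 1)) • y
        + (1 - MonoidAlgebra.single (-1 : (ZMod m)ˣ) (1 : ℚ_[p])) * z := by
  have hp := (Fact.out : p.Prime)
  have hq3 : 2 < q * p ^ n := by
    have hpow : 1 ≤ p ^ n := Nat.one_le_pow n p hp.pos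
    by_cases h2 : p = 2
    · rw [hq, if_pos h2]
      have : 4 * 1 ≤ 4 * p ^ n := Nat.mul_le_mul_left 4 hpow
      omega
    · rw [hq, if_neg h2]
      have hp3 : 3 ≤ p := by
        have := hp.two_le
        omega
      have : 3 * 1 ≤ p * p ^ n := Nat.mul_le_mul hp3 hpow
      omega
  have hm3 : 2 < m := lt_of_lt_of_le hq3 (Nat.le_of_dvd hm hmul)
  haveI : NeZero m := ⟨by omega⟩
  have hφpos : 0 < φ := by
    rw [hφ]
    exact Nat.totient_pos.mpr (by omega)
  have hφeven : Even φ := by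
    rw [hφ]
    exact Nat.totient_even hq3
  have hodd : Odd (φ - 1) := Nat.Even.sub_odd (by omega) hφeven odd_one
  have hedvd : p ^ (if p = 2 then n + 2 else n + 1) ∣ m := by
    refine dvd_trans ?_ hmul
    by_cases h2 : p = 2
    · rw [if_pos h2, hq, if_pos h2, h2]
      have : (2:ℕ) ^ (n + 2) = 4 * 2 ^ n := by ring
      rw [this]
    · rw [if_neg h2, hq, if_neg h2]
      have : p ^ (n + 1) = p * p ^ n := by ring
      rw [this]
  have hpm : p ∣ m := by
    refine dvd_trans ?_ hedvd
    calc p = p ^ 1 := (pow_one p).symm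
    _ ∣ p ^ (if p = 2 then n + 2 else n + 1) := pow_dvd_pow p (by split <;> omega)
  have hℓp : ¬ p ∣ ℓ := by
    intro h
    have : p = ℓ := (Nat.prime_dvd_prime_iff_eq hp hℓ).mp h
    exact hnd (this ▸ hpm)
  have hnormℓ : ‖(ℓ : ℚ_[p])‖ = 1 := norm_nat_eq_one_of_not_dvd p ℓ hℓp
  have hd : ‖(ℓ : ℚ_[p]) * (m : ℚ_[p]) * (φ : ℚ_[p])‖ = ‖(m : ℚ_[p])‖ * ‖(φ : ℚ_[p])‖ := by
    rw [norm_mul, norm_mul, hnormℓ, one_mul]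
  have hdpos : (0:ℝ) < ‖(m : ℚ_[p])‖ * ‖(φ : ℚ_[p])‖ := by
    apply mul_pos <;> (rw [norm_pos_iff]; exact_mod_cast (by omega : ¬ _ = 0))
  set x := projMapP p (ℓ * m) m (dvd_mul_left m ℓ) (aElt p φ (ℓ * m))
        - (1 - ((ℓ : ℚ_[p]) ^ (φ - 1)) •
              MonoidAlgebra.single
                (ZMod.unitOfCoprime ℓ (hℓ.coprime_iff_not_dvd.mpr hnd)) (1 : ℚ_[p]))
          * aElt p φ m with hx
  have hxg : ∀ g : (ZMod m)ˣ, x.coeff g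
      = -(1 / ((ℓ : ℚ_[p]) * (m : ℚ_[p]) * (φ : ℚ_[p]))) *
          ((∑ j ∈ Finset.range ℓ, ((((g : ZMod m)).val + j * m : ℕ) : ℚ_[p]) ^ φ)
            - (ℓ : ℚ_[p]) * ((((g : ZMod m)).val : ℚ_[p]) ^ φ)) := by
    intro g
    rw [hx]
    exact lhs_apply p φ m ℓ hφpos (by omega) hℓ hnd g
  have h1 : ∀ g : (ZMod m)ˣ, ‖x.coeff g‖ ≤ 1 := by
    intro g
    rw [hxg g, neg_mul, norm_neg, norm_mul, norm_div, norm_one, one_div,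
      inv_mul_le_iff₀ (by rw [hd]; exact hdpos), mul_one, hd]
    exact bound_A p φ ℓ m _ (by omega) hpm
  have h2 : ∀ g : (ZMod m)ˣ, ‖x.coeff g + x.coeff (-g)‖ ≤ ‖(p : ℚ_[p])‖ ^ (n + 1) := by
    intro g
    have hs : (((-g : (ZMod m)ˣ) : ZMod m)).val = m - ((g : ZMod m)).val := by
      rw [Units.val_neg, ZMod.neg_val, if_neg (unit_coe_ne_zero (by omega) g)]
    rw [hxg g, hxg (-g), hs, ← mul_add, neg_mul, norm_neg, norm_mul, norm_div,
      norm_one, one_div, inv_mul_le_iff₀ (by rw [hd]; exact hdpos), hd]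
    have hb := bound_B p n φ ℓ m ((g : ZMod m)).val (m - ((g : ZMod m)).val)
      (by omega) hodd (by
        have := (val_unit_bounds (by omega) g).2
        omega) hedvd
    refine le_trans hb (le_of_eq (by ring))
  obtain ⟨y, z, hy, hz, hxyz⟩ := split_lemma p m hm3 n x h1 h2
  exact ⟨y, z, hy, hz, hxyz⟩
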